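/- arXiv:1008.4631 — 2 statements merged into one kernel-verified Lean document; each statement's English description precedes it below -/
import Mathlib

section
/- A sequence (f_n) in L²(ℝ^d) converges strongly in L² to f if and only if it converges weakly to f, satisfies lim_{R→∞} limsup_{n→∞} ∫_{|x|>R} |f_n(x)|² dx = 0, and lim_{L→∞} limsup_{n→∞} ∫_{|k|>L} |\hat{f_n}(k)|² dk = 0, where \hat{f} denotes the Fourier transform. -/
open Filter Topology MeasureTheory FourierTransform
open scoped ENNReal

open Filter Topology MeasureTheory FourierTransform
open scoped ENNReal InnerProductSpace

noncomputable section
namespace L2Tight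

abbrev Ed (d : ℕ) := EuclideanSpace ℝ (Fin d)
abbrev Hd (d : ℕ) := Lp ℂ 2 (volume : Measure (Ed d))

variable {d : ℕ}

/-- multiplication by the indicator of `s`, as a map on `L²`. -/
def cut (s : Set (Ed d)) (hs : MeasurableSet s) (h : Hd d) : Hd d :=
  MemLp.toLp _ ((Lp.memLp h).indicator hs)

lemma coeFn_cut (s : Set (Ed d)) (hs : MeasurableSet s) (h : Hd d) :
    (cut s hs h : Ed d → ℂ) =ᵐ[volume] s.indicator h :=
  MemLp.coeFn_toLp _

lemma cut_add_compl (s : Set (Ed d)) (hs : MeasurableSet s) (h : Hd d) :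
    cut s hs h + cut sᶜ hs.compl h = h := by
  apply Lp.ext
  filter_upwards [Lp.coeFn_add (cut s hs h) (cut sᶜ hs.compl h), coeFn_cut s hs h,
    coeFn_cut sᶜ hs.compl h] with x hx h1 h2
  rw [hx]
  simp only [Pi.add_apply, h1, h2]
  exact congrFun (Set.indicator_self_add_compl s (h : Ed d → ℂ)) x

lemma cut_sub (s : Set (Ed d)) (hs : MeasurableSet s) (a b : Hd d) :
    cut s hs (a - b) = cut s hs a - cut s hs b := by
  apply Lp.ext
  filter_upwards [Lp.coeFn_sub (cut s hs a) (cut s hs b), coeFn_cut s hs (a - b),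
    coeFn_cut s hs a, coeFn_cut s hs b, Lp.coeFn_sub a b] with x hx h1 h2 h3 h4
  rw [h1, hx]
  simp only [Pi.sub_apply, h2, h3]
  by_cases hxs : x ∈ s
  · rw [Set.indicator_of_mem hxs, Set.indicator_of_mem hxs, Set.indicator_of_mem hxs, h4,
      Pi.sub_apply]
  · simp [Set.indicator_of_notMem hxs]

lemma norm_cut_le (s : Set (Ed d)) (hs : MeasurableSet s) (h : Hd d) : ‖cut s hs h‖ ≤ ‖h‖ := by
  rw [cut, Lp.norm_toLp, Lp.norm_def]
  gcongr
  · exact Lp.eLpNorm_ne_top h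
  · exact eLpNorm_indicator_le _

/-- the squared L² norm as an integral -/
lemma norm_sq_eq_integral (h : Hd d) : ‖h‖ ^ 2 = ∫ x, ‖(h : Ed d → ℂ) x‖ ^ 2 := by
  rw [← inner_self_eq_norm_sq (𝕜 := ℂ) h, L2.inner_def,
    ← integral_re (L2.integrable_inner h h)]
  congr 1
  ext x
  rw [← inner_self_eq_norm_sq (𝕜 := ℂ)]

lemma norm_cut_sq (s : Set (Ed d)) (hs : MeasurableSet s) (h : Hd d) :
    ‖cut s hs h‖ ^ 2 = ∫ x in s, ‖(h : Ed d → ℂ) x‖ ^ 2 := by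
  rw [norm_sq_eq_integral, ← integral_indicator hs]
  apply integral_congr_ae
  filter_upwards [coeFn_cut s hs h] with x hx
  rw [hx]
  by_cases hxs : x ∈ s <;>
    simp [Set.indicator_of_mem, Set.indicator_of_notMem, hxs]

lemma inner_cut_comm (s : Set (Ed d)) (hs : MeasurableSet s) (a b : Hd d) :
    ⟪a, cut s hs b⟫_ℂ = ⟪cut s hs a, b⟫_ℂ := by
  rw [L2.inner_def, L2.inner_def]
  apply integral_congr_ae
  filter_upwards [coeFn_cut s hs a, coeFn_cut s hs b] with x h1 h2
  rw [h1, h2]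
  by_cases hxs : x ∈ s <;>
    simp [RCLike.inner_apply, Set.indicator_of_mem, Set.indicator_of_notMem, hxs]


lemma measurableSet_tail (R : ℝ) : MeasurableSet {x : Ed d | R < ‖x‖} :=
  (isOpen_lt continuous_const continuous_norm).measurableSet

lemma integrable_norm_sq (h : Hd d) :
    Integrable (fun x => ‖(h : Ed d → ℂ) x‖ ^ 2) volume := by
  apply (L2.integrable_inner (𝕜 := ℂ) h h).re.congr
  filter_upwards [] with x
  rw [← inner_self_eq_norm_sq (𝕜 := ℂ)]

lemma tendsto_tail_self (h : Hd d) :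
    Tendsto (fun R : ℝ => ∫ x in {x : Ed d | R < ‖x‖}, ‖(h : Ed d → ℂ) x‖ ^ 2)
      atTop (𝓝 0) := by
  have key : Tendsto (fun R : ℝ => ∫ x,
      {x : Ed d | R < ‖x‖}.indicator (fun x => ‖(h : Ed d → ℂ) x‖ ^ 2) x)
      atTop (𝓝 (∫ _ : Ed d, (0:ℝ))) := by
    apply tendsto_integral_filter_of_dominated_convergence
      (fun x => ‖(h : Ed d → ℂ) x‖ ^ 2)
    · filter_upwards [] with R
      exact (integrable_norm_sq h).aestronglyMeasurable.indicator (measurableSet_tail R)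
    · filter_upwards [] with R
      filter_upwards [] with x
      calc ‖{x : Ed d | R < ‖x‖}.indicator (fun x => ‖(h : Ed d → ℂ) x‖ ^ 2) x‖
          ≤ ‖‖(h : Ed d → ℂ) x‖ ^ 2‖ := norm_indicator_le_norm_self _ _
        _ = ‖(h : Ed d → ℂ) x‖ ^ 2 := by rw [Real.norm_eq_abs, abs_of_nonneg (by positivity)]
    · exact integrable_norm_sq h
    · filter_upwards [] with x
      apply Tendsto.congr' _ tendsto_const_nhds
      filter_upwards [eventually_ge_atTop ‖x‖] with R hR
      exact (Set.indicator_of_notMem (by simpa using hR) _).symm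
  simp only [integral_zero] at key
  apply key.congr
  intro R
  exact integral_indicator (measurableSet_tail R)

lemma tendsto_limsup_tail (v : ℕ → Hd d) (w : Hd d) (hv : Tendsto v atTop (𝓝 w)) :
    Tendsto (fun R : ℝ =>
      limsup (fun n => ∫ x in {x : Ed d | R < ‖x‖}, ‖(v n : Ed d → ℂ) x‖ ^ 2) atTop)
      atTop (𝓝 0) := by
  obtain ⟨M, hM⟩ := hv.norm.bddAbove_range
  simp only [upperBounds, Set.mem_range, forall_exists_index, Set.mem_setOf_eq] at hM
  have hMn : ∀ n, ‖v n‖ ≤ M := fun n => hM n rfl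
  have tail_eq : ∀ (R : ℝ) (u : Hd d), ‖cut _ (measurableSet_tail R) u‖ ^ 2
      = ∫ x in {x : Ed d | R < ‖x‖}, ‖(u : Ed d → ℂ) x‖ ^ 2 :=
    fun R u => norm_cut_sq _ _ u
  apply tendsto_of_tendsto_of_tendsto_of_le_of_le (g := fun _ : ℝ => (0:ℝ))
    (h := fun R : ℝ => ∫ x in {x : Ed d | R < ‖x‖}, ‖(w : Ed d → ℂ) x‖ ^ 2)
    tendsto_const_nhds (tendsto_tail_self w)
  · intro R
    apply le_limsup_of_frequently_le
    · apply Eventually.frequently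
      filter_upwards [] with n
      rw [← tail_eq]
      positivity
    · apply isBoundedUnder_of
      refine ⟨M ^ 2, fun n => ?_⟩
      rw [← tail_eq]
      have h1 : ‖cut _ (measurableSet_tail R) (v n)‖ ≤ M :=
        (norm_cut_le _ _ _).trans (hMn n)
      have h2 : (0:ℝ) ≤ ‖cut _ (measurableSet_tail R) (v n)‖ := norm_nonneg _
      nlinarith
  · intro R
    set T := {x : Ed d | R < ‖x‖}
    have hT := measurableSet_tail (d := d) R
    have pw : ∀ n, ∫ x in T, ‖(v n : Ed d → ℂ) x‖ ^ 2
        ≤ (‖v n - w‖ + ‖cut T hT w‖) ^ 2 := by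
      intro n
      rw [← tail_eq]
      have h1 : ‖cut T hT (v n)‖ ≤ ‖v n - w‖ + ‖cut T hT w‖ := by
        have : cut T hT (v n) = cut T hT (v n - w) + cut T hT w := by
          rw [cut_sub]; abel
        rw [this]
        exact (norm_add_le _ _).trans (by gcongr; exact norm_cut_le _ _ _)
      have h2 : (0:ℝ) ≤ ‖cut T hT (v n)‖ := norm_nonneg _
      nlinarith [norm_nonneg (v n - w), norm_nonneg (cut T hT w)]
    have hb : Tendsto (fun n => (‖v n - w‖ + ‖cut T hT w‖) ^ 2) atTop
        (𝓝 (∫ x in T, ‖(w : Ed d → ℂ) x‖ ^ 2)) := by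
      have h0 : Tendsto (fun n => ‖v n - w‖) atTop (𝓝 0) := by
        rw [← tendsto_sub_nhds_zero_iff] at hv
        simpa using hv.norm
      have := ((h0.add (tendsto_const_nhds (x := ‖cut T hT w‖))).pow 2)
      rw [zero_add] at this
      rw [← tail_eq R w]
      exact this
    calc limsup (fun n => ∫ x in T, ‖(v n : Ed d → ℂ) x‖ ^ 2) atTop
        ≤ limsup (fun n => (‖v n - w‖ + ‖cut T hT w‖) ^ 2) atTop := by
          have cob : IsCoboundedUnder (fun x1 x2 => x1 ≤ x2) atTop
              fun n => ∫ x in T, ‖(v n : Ed d → ℂ) x‖ ^ 2 := by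
            apply IsBoundedUnder.isCoboundedUnder_le
            apply isBoundedUnder_of
            exact ⟨0, fun n => by rw [← tail_eq]; positivity⟩
          exact limsup_le_limsup (Eventually.of_forall pw) cob hb.isBoundedUnder_le
      _ = _ := hb.limsup_eq

open scoped RealInnerProductSpace

/-- truncated plane wave -/
def wk (s : Set (Ed d)) (k : Ed d) : Ed d → ℂ :=
  s.indicator fun v => (starRingEnd ℂ) ((𝐞 (-⟪v, k⟫_ℝ) : Circle) : ℂ)

lemma continuous_wk_core (k : Ed d) :
    Continuous fun v : Ed d => (starRingEnd ℂ) ((𝐞 (-⟪v, k⟫_ℝ) : Circle) : ℂ) := by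
  exact Complex.continuous_conj.comp (continuous_subtype_val.comp
    (Real.continuous_fourierChar.comp (continuous_id.inner continuous_const).neg))

lemma memℒp_wk (s : Set (Ed d)) (hs : MeasurableSet s) (hsfin : volume s ≠ ⊤) (k : Ed d) :
    MemLp (wk s k) 2 volume := by
  constructor
  · exact ((continuous_wk_core k).aestronglyMeasurable).indicator hs
  · apply lt_of_le_of_lt (eLpNorm_mono (g := s.indicator fun _ => (1:ℂ)) ?_)
    · rw [eLpNorm_indicator_const hs (by norm_num) (by norm_num)]
      simp only [enorm_one, one_mul]
      exact ENNReal.rpow_lt_top_of_nonneg (by norm_num) hsfin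
    · intro x
      unfold wk
      by_cases hx : x ∈ s <;>
        simp [Set.indicator_of_mem, Set.indicator_of_notMem, hx, Circle.norm_coe]

lemma norm_toLp_wk_le (s : Set (Ed d)) (hs : MeasurableSet s) (hsfin : volume s ≠ ⊤) (k : Ed d) :
    ‖(memℒp_wk s hs hsfin k).toLp (wk s k)‖ ≤ ((volume s) ^ (1/(2:ℝ))).toReal := by
  rw [Lp.norm_toLp]
  apply ENNReal.toReal_mono (ENNReal.rpow_ne_top_of_nonneg (by norm_num) hsfin)
  apply le_trans (eLpNorm_mono (g := s.indicator fun _ => (1:ℂ)) ?_)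
  · rw [eLpNorm_indicator_const hs (by norm_num) (by norm_num)]
    simp [ENNReal.toReal_ofNat]
  · intro x
    unfold wk
    by_cases hx : x ∈ s <;>
      simp [Set.indicator_of_mem, Set.indicator_of_notMem, hx, Circle.norm_coe]

lemma integrableOn_Lp (h : Hd d) (s : Set (Ed d)) (hsfin : volume s ≠ ⊤) :
    IntegrableOn (h : Ed d → ℂ) s volume := by
  haveI := Fact.mk hsfin.lt_top
  haveI : IsFiniteMeasure (volume.restrict s : Measure (Ed d)) := inferInstance
  exact MemLp.integrable (by norm_num) ((Lp.memLp h).restrict s)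

lemma integrable_indicator_Lp (h : Hd d) (s : Set (Ed d)) (hs : MeasurableSet s)
    (hsfin : volume s ≠ ⊤) :
    Integrable (s.indicator (h : Ed d → ℂ)) volume :=
  (integrable_indicator_iff hs).2 (integrableOn_Lp h s hsfin)

lemma integrable_cut (s : Set (Ed d)) (hs : MeasurableSet s) (hsfin : volume s ≠ ⊤) (h : Hd d) :
    Integrable ((cut s hs h : Ed d → ℂ)) volume :=
  (integrable_indicator_Lp h s hs hsfin).congr (coeFn_cut s hs h).symm

lemma fourier_congr {a b : Ed d → ℂ} (hab : a =ᵐ[volume] b) : 𝓕 a = 𝓕 b := by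
  funext wv
  rw [Real.fourier_eq, Real.fourier_eq]
  apply integral_congr_ae
  filter_upwards [hab] with x hx
  rw [hx]

/-- the Fourier integral of a truncated L² function, as an inner product -/
lemma fourier_indicator_eq_inner (s : Set (Ed d)) (hs : MeasurableSet s)
    (hsfin : volume s ≠ ⊤) (h : Hd d) (k : Ed d) :
    𝓕 (s.indicator (h : Ed d → ℂ)) k
      = ⟪(memℒp_wk s hs hsfin k).toLp (wk s k), h⟫_ℂ := by
  rw [L2.inner_def, Real.fourier_eq]
  apply integral_congr_ae
  filter_upwards [(memℒp_wk s hs hsfin k).coeFn_toLp] with x hx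
  rw [hx]
  simp only [RCLike.inner_apply, wk]
  by_cases hxs : x ∈ s
  · simp only [Set.indicator_of_mem hxs, RingHomCompTriple.comp_apply, RingHom.id_apply,
      Circle.smul_def, smul_eq_mul]
    exact mul_comm _ _
  · simp [Set.indicator_of_notMem hxs]

lemma key_compact
    (F : Hd d ≃ₗᵢ[ℂ] Hd d)
    (hF : ∀ g : Hd d, Integrable (g : Ed d → ℂ) volume →
        (F g : Ed d → ℂ) =ᵐ[volume] 𝓕 (g : Ed d → ℂ))
    (h : ℕ → Hd d)
    (hweak : ∀ w : Hd d, Tendsto (fun n => ⟪w, h n⟫_ℂ) atTop (𝓝 0))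
    (M : ℝ) (hM : ∀ n, ‖h n‖ ≤ M)
    (s t : Set (Ed d)) (hs : MeasurableSet s) (ht : MeasurableSet t)
    (hsfin : volume s ≠ ⊤) (htfin : volume t ≠ ⊤) :
    Tendsto (fun n => ‖cut t ht (F (cut s hs (h n)))‖) atTop (𝓝 0) := by
  have hM0 : 0 ≤ M := (norm_nonneg (h 0)).trans (hM 0)
  set B : ℝ := ((volume s) ^ (1/(2:ℝ))).toReal with hB
  have hB0 : 0 ≤ B := ENNReal.toReal_nonneg
  have sq_eq : ∀ n, ‖cut t ht (F (cut s hs (h n)))‖ ^ 2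
      = ∫ k in t, ‖𝓕 (s.indicator ((h n : Ed d → ℂ))) k‖ ^ 2 := by
    intro n
    rw [norm_cut_sq]
    apply setIntegral_congr_ae ht
    filter_upwards [hF _ (integrable_cut s hs hsfin (h n))] with k hk _
    rw [hk, fourier_congr (coeFn_cut s hs (h n))]
  have bound_ptwise : ∀ n k, ‖𝓕 (s.indicator ((h n : Ed d → ℂ))) k‖ ≤ B * M := by
    intro n k
    rw [fourier_indicator_eq_inner s hs hsfin (h n) k]
    calc ‖⟪(memℒp_wk s hs hsfin k).toLp (wk s k), h n⟫_ℂ‖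
        ≤ ‖(memℒp_wk s hs hsfin k).toLp (wk s k)‖ * ‖h n‖ := norm_inner_le_norm _ _
      _ ≤ B * M := by
          apply mul_le_mul (norm_toLp_wk_le s hs hsfin k) (hM n) (norm_nonneg _) hB0
  have key : Tendsto (fun n => ∫ k in t, ‖𝓕 (s.indicator ((h n : Ed d → ℂ))) k‖ ^ 2)
      atTop (𝓝 0) := by
    haveI := Fact.mk htfin.lt_top
    have z : (0:ℝ) = ∫ (_ : Ed d) in t, (0:ℝ) ∂volume := by simp
    rw [z]
    apply tendsto_integral_filter_of_dominated_convergence (fun _ => (B * M) ^ 2)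
    · filter_upwards [] with n
      apply Continuous.aestronglyMeasurable
      apply Continuous.pow
      apply Continuous.norm
      exact VectorFourier.fourierIntegral_continuous Real.continuous_fourierChar
        continuous_inner (integrable_indicator_Lp (h n) s hs hsfin)
    · filter_upwards [] with n
      filter_upwards [] with k
      have h1 := bound_ptwise n k
      have h2 : (0:ℝ) ≤ ‖𝓕 (s.indicator ((h n : Ed d → ℂ))) k‖ := norm_nonneg _
      rw [Real.norm_eq_abs, abs_of_nonneg (by positivity)]
      nlinarith
    · exact integrable_const _
    · filter_upwards [] with k
      have : ∀ n, ‖𝓕 (s.indicator ((h n : Ed d → ℂ))) k‖ ^ 2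
          = ‖⟪(memℒp_wk s hs hsfin k).toLp (wk s k), h n⟫_ℂ‖ ^ 2 := by
        intro n
        rw [fourier_indicator_eq_inner s hs hsfin (h n) k]
      rw [funext this]
      have := ((hweak ((memℒp_wk s hs hsfin k).toLp (wk s k))).norm.pow 2)
      simpa using this
  have sq_t : Tendsto (fun n => ‖cut t ht (F (cut s hs (h n)))‖ ^ 2) atTop (𝓝 0) := by
    rw [funext sq_eq]; exact key
  have := sq_t.sqrt
  rw [Real.sqrt_zero] at this
  apply this.congr
  intro n
  rw [Real.sqrt_sq (norm_nonneg _)]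

lemma vol_compl_tail_ne_top (R : ℝ) : volume ({x : Ed d | R < ‖x‖}ᶜ) ≠ ⊤ := by
  have hset : {x : Ed d | R < ‖x‖}ᶜ = Metric.closedBall 0 R := by
    ext x; simp [mem_closedBall_zero_iff, not_lt]
  rw [hset]
  exact (isCompact_closedBall 0 R).measure_lt_top.ne

end L2Tight

set_option maxHeartbeats 2000000 in
open L2Tight in
theorem L2_strong_convergence_iff_weak_and_tight'
    (d : ℕ)
    (F : Lp ℂ 2 (volume : Measure (EuclideanSpace ℝ (Fin d))) ≃ₗᵢ[ℂ]
         Lp ℂ 2 (volume : Measure (EuclideanSpace ℝ (Fin d))))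
    (hF : ∀ g : Lp ℂ 2 (volume : Measure (EuclideanSpace ℝ (Fin d))),
        Integrable (g : EuclideanSpace ℝ (Fin d) → ℂ) volume →
        (F g : EuclideanSpace ℝ (Fin d) → ℂ) =ᵐ[volume] 𝓕 (g : EuclideanSpace ℝ (Fin d) → ℂ))
    (f : ℕ → Lp ℂ 2 (volume : Measure (EuclideanSpace ℝ (Fin d))))
    (g : Lp ℂ 2 (volume : Measure (EuclideanSpace ℝ (Fin d)))) :
    Tendsto f atTop (𝓝 g) ↔
      ((∀ φ : StrongDual ℂ (Lp ℂ 2 (volume : Measure (EuclideanSpace ℝ (Fin d)))),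
          Tendsto (fun n => φ (f n)) atTop (𝓝 (φ g))) ∧
        Tendsto (fun R : ℝ =>
            Filter.limsup (fun n =>
              ∫ x in {x : EuclideanSpace ℝ (Fin d) | R < ‖x‖}, ‖(f n : EuclideanSpace ℝ (Fin d) → ℂ) x‖ ^ 2)
              atTop)
          atTop (𝓝 0) ∧
        Tendsto (fun L : ℝ =>
            Filter.limsup (fun n =>
              ∫ k in {k : EuclideanSpace ℝ (Fin d) | L < ‖k‖}, ‖(F (f n) : EuclideanSpace ℝ (Fin d) → ℂ) k‖ ^ 2)
              atTop)
          atTop (𝓝 0)) := by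
  constructor
  · intro hf
    exact ⟨fun φ => (φ.cont.tendsto g).comp hf,
      tendsto_limsup_tail f g hf,
      tendsto_limsup_tail (fun n => F (f n)) (F g) ((F.continuous.tendsto g).comp hf)⟩
  · rintro ⟨hweak, hR, hL⟩
    have hinner : ∀ w : Hd d, Tendsto (fun n => ⟪w, f n⟫_ℂ) atTop (𝓝 ⟪w, g⟫_ℂ) :=
      fun w => hweak (innerSL ℂ w)
    have hinner0 : ∀ w : Hd d, Tendsto (fun n => ⟪w, f n - g⟫_ℂ) atTop (𝓝 0) := by
      intro w
      have h1 := (hinner w).sub_const ⟪w, g⟫_ℂ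
      simp only [sub_self] at h1
      apply h1.congr
      intro n
      rw [inner_sub_right]
    -- boundedness of the sequence
    obtain ⟨C, hC⟩ : ∃ C : ℝ, ∀ n, ‖f n‖ ≤ C := by
      have pt : ∀ x : Hd d, ∃ Cx, ∀ n, ‖(innerSL ℂ (f n)) x‖ ≤ Cx := by
        intro x
        have hconv : Tendsto (fun n => ⟪f n, x⟫_ℂ) atTop (𝓝 (⟪g, x⟫_ℂ)) := by
          have h2 := (Complex.continuous_conj.tendsto _).comp (hinner x)
          simp only [Function.comp_def, inner_conj_symm] at h2
          exact h2
        obtain ⟨Cx, hCx⟩ := hconv.norm.bddAbove_range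
        simp only [upperBounds, Set.mem_range, forall_exists_index,
          Set.mem_setOf_eq] at hCx
        exact ⟨Cx, fun n => hCx n rfl⟩
      obtain ⟨C', hC'⟩ := banach_steinhaus pt
      exact ⟨C', fun n => by rw [← innerSL_apply_norm ℂ (f n)]; exact hC' n⟩
    set M : ℝ := C + ‖g‖ with hMdef
    have hM : ∀ n, ‖f n - g‖ ≤ M := fun n => (norm_sub_le _ _).trans (add_le_add_left (hC n) _)
    have hM0 : (0:ℝ) ≤ M := (norm_nonneg (f 0 - g)).trans (hM 0)
    rw [Metric.tendsto_atTop]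
    intro ε hε
    set δ : ℝ := ε ^ 2 / (3 * M + 1) with hδdef
    have hδ : 0 < δ := by positivity
    -- choose R
    obtain ⟨R, hR1, hR2⟩ := ((hR.eventually_lt_const (show (0:ℝ) < (δ/2)^2 by positivity)).and
      ((tendsto_tail_self g).eventually_lt_const (show (0:ℝ) < (δ/2)^2 by positivity))).exists
    obtain ⟨L, hL1, hL2⟩ := ((hL.eventually_lt_const (show (0:ℝ) < (δ/2)^2 by positivity)).and
      ((tendsto_tail_self (F g)).eventually_lt_const (show (0:ℝ) < (δ/2)^2 by positivity))).exists
    have hTR := measurableSet_tail (d := d) R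
    have hTL := measurableSet_tail (d := d) L
    -- eventually the space tail of f n is small
    have evR : ∀ᶠ n in atTop,
        (∫ x in {x : Ed d | R < ‖x‖}, ‖(f n : Ed d → ℂ) x‖ ^ 2) < (δ/2)^2 := by
      have hbd : IsBoundedUnder (fun x1 x2 => x1 ≤ x2) atTop fun n =>
          ∫ x in {x : Ed d | R < ‖x‖}, ‖(f n : Ed d → ℂ) x‖ ^ 2 := by
        apply isBoundedUnder_of
        refine ⟨C ^ 2, fun n => ?_⟩
        rw [← norm_cut_sq _ hTR]
        have h1 : ‖cut _ hTR (f n)‖ ≤ C := (norm_cut_le _ _ _).trans (hC n)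
        have h2 : (0:ℝ) ≤ ‖cut _ hTR (f n)‖ := norm_nonneg _
        nlinarith
      exact eventually_lt_of_limsup_lt hR1 hbd
    have evL : ∀ᶠ n in atTop,
        (∫ k in {k : Ed d | L < ‖k‖}, ‖(F (f n) : Ed d → ℂ) k‖ ^ 2) < (δ/2)^2 := by
      have hbd : IsBoundedUnder (fun x1 x2 => x1 ≤ x2) atTop fun n =>
          ∫ k in {k : Ed d | L < ‖k‖}, ‖(F (f n) : Ed d → ℂ) k‖ ^ 2 := by
        apply isBoundedUnder_of
        refine ⟨C ^ 2, fun n => ?_⟩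
        rw [← norm_cut_sq _ hTL]
        have h1 : ‖cut _ hTL (F (f n))‖ ≤ C := by
          apply (norm_cut_le _ _ _).trans
          rw [F.norm_map]
          exact hC n
        have h2 : (0:ℝ) ≤ ‖cut _ hTL (F (f n))‖ := norm_nonneg _
        nlinarith
      exact eventually_lt_of_limsup_lt hL1 hbd
    -- the compactness term
    have evA : ∀ᶠ n in atTop,
        ‖cut _ hTL.compl (F (cut _ hTR.compl (f n - g)))‖ < δ := by
      apply Tendsto.eventually_lt_const hδ
      exact key_compact F hF (fun n => f n - g) hinner0 M hM _ _ hTR.compl hTL.compl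
        (vol_compl_tail_ne_top R) (vol_compl_tail_ne_top L)
    -- main estimate
    have main : ∀ᶠ n in atTop, dist (f n) g < ε := by
      filter_upwards [evR, evL, evA] with n h1 h2 h3
      rw [dist_eq_norm]
      set h : Hd d := f n - g with hh
      set u : Hd d := F (f n) - F g with hu
      have huh : u = F h := by rw [hu, hh, map_sub]
      -- space cut bound
      have cutR : ‖cut _ hTR h‖ ≤ δ := by
        rw [hh, cut_sub]
        apply (norm_sub_le _ _).trans
        have a1 : ‖cut _ hTR (f n)‖ ≤ δ/2 := by
          have := h1
          rw [← norm_cut_sq _ hTR] at this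
          nlinarith [norm_nonneg (cut _ hTR (f n)), hδ]
        have a2 : ‖cut _ hTR g‖ ≤ δ/2 := by
          have := hR2
          rw [← norm_cut_sq _ hTR] at this
          nlinarith [norm_nonneg (cut _ hTR g), hδ]
        linarith
      have cutL : ‖cut _ hTL u‖ ≤ δ := by
        rw [hu, cut_sub]
        apply (norm_sub_le _ _).trans
        have a1 : ‖cut _ hTL (F (f n))‖ ≤ δ/2 := by
          have := h2
          rw [← norm_cut_sq _ hTL] at this
          nlinarith [norm_nonneg (cut _ hTL (F (f n))), hδ]
        have a2 : ‖cut _ hTL (F g)‖ ≤ δ/2 := by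
          have := hL2
          rw [← norm_cut_sq _ hTL] at this
          nlinarith [norm_nonneg (cut _ hTL (F g)), hδ]
        linarith
      have hnormu : ‖u‖ ≤ M := by rw [huh, F.norm_map]; exact hM n
      -- decompose
      have sq : ‖h‖ ^ 2 = RCLike.re (⟪u, cut _ hTL u⟫_ℂ)
          + RCLike.re (⟪u, cut _ hTL.compl u⟫_ℂ) := by
        have : ‖h‖ ^ 2 = ‖u‖ ^ 2 := by rw [huh, F.norm_map]
        rw [this, ← inner_self_eq_norm_sq (𝕜 := ℂ) u]
        nth_rewrite 2 [← cut_add_compl _ hTL u]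
        rw [inner_add_right, map_add]
      have term1 : RCLike.re (⟪u, cut _ hTL u⟫_ℂ) ≤ M * δ := by
        apply (RCLike.re_le_norm _).trans
        apply (norm_inner_le_norm _ _).trans
        exact mul_le_mul hnormu cutL (norm_nonneg _) hM0
      -- term 2
      set G : Hd d := cut _ hTL.compl u with hG
      have hnormG : ‖G‖ ≤ M := (norm_cut_le _ _ _).trans hnormu
      set v : Hd d := F.symm G with hv
      have hnormv : ‖v‖ ≤ M := by rw [hv, F.symm.norm_map]; exact hnormG
      have eq2 : ⟪u, G⟫_ℂ = ⟪cut _ hTR h, v⟫_ℂ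
          + ⟪cut _ hTL.compl (F (cut _ hTR.compl h)), u⟫_ℂ := by
        have e1 : ⟪u, G⟫_ℂ = ⟪h, v⟫_ℂ := by
          rw [huh, hv, ← F.inner_map_map h (F.symm G), F.apply_symm_apply]
        have e2 : ⟪cut _ hTR.compl h, v⟫_ℂ
            = ⟪cut _ hTL.compl (F (cut _ hTR.compl h)), u⟫_ℂ := by
          rw [← F.inner_map_map (cut _ hTR.compl h) v, hv, F.apply_symm_apply, hG,
            inner_cut_comm, huh]
        rw [e1]
        nth_rewrite 1 [← cut_add_compl _ hTR h]
        rw [inner_add_left, e2]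
      have term2 : RCLike.re (⟪u, G⟫_ℂ) ≤ δ * M + δ * M := by
        rw [eq2, map_add]
        have b1 : RCLike.re (⟪cut _ hTR h, v⟫_ℂ) ≤ δ * M := by
          apply (RCLike.re_le_norm _).trans
          apply (norm_inner_le_norm _ _).trans
          exact mul_le_mul cutR hnormv (norm_nonneg _) hδ.le
        have b2 : RCLike.re (⟪cut _ hTL.compl (F (cut _ hTR.compl h)), u⟫_ℂ) ≤ δ * M := by
          apply (RCLike.re_le_norm _).trans
          apply (norm_inner_le_norm _ _).trans
          exact mul_le_mul h3.le hnormu (norm_nonneg _) hδ.le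
        linarith
      have final_sq : ‖h‖ ^ 2 ≤ 3 * M * δ := by
        rw [sq]
        have := term1
        have := term2
        rw [← hG] at *
        linarith
      have : ‖h‖ ^ 2 < ε ^ 2 := by
        apply final_sq.trans_lt
        rw [hδdef]
        have h30 : (0:ℝ) < 3 * M + 1 := by linarith
        have hlt : 3 * M / (3 * M + 1) < 1 := by rw [div_lt_one h30]; linarith
        have heps : 0 < ε ^ 2 := by positivity
        calc 3 * M * (ε ^ 2 / (3 * M + 1)) = (3 * M / (3 * M + 1)) * ε ^ 2 := by ring
          _ < 1 * ε ^ 2 := mul_lt_mul_of_pos_right hlt heps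
          _ = ε ^ 2 := one_mul _
      nlinarith [norm_nonneg h]
    rw [eventually_atTop] at main
    exact main

/-- A sequence `(fₙ)` in `L²(ℝᵈ)` converges strongly in `L²` to `f` iff it converges weakly
to `f`, is tight in position space, and is tight in Fourier space.  Here `F` is the unitary
Fourier transform on `L²(ℝᵈ)`, i.e. the unitary extension of the Fourier integral. -/
theorem L2_strong_convergence_iff_weak_and_tight
    (d : ℕ)
    (F : Lp ℂ 2 (volume : Measure (EuclideanSpace ℝ (Fin d))) ≃ₗᵢ[ℂ]
         Lp ℂ 2 (volume : Measure (EuclideanSpace ℝ (Fin d))))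
    (hF : ∀ g : Lp ℂ 2 (volume : Measure (EuclideanSpace ℝ (Fin d))),
        Integrable (g : EuclideanSpace ℝ (Fin d) → ℂ) volume →
        (F g : EuclideanSpace ℝ (Fin d) → ℂ) =ᵐ[volume] 𝓕 (g : EuclideanSpace ℝ (Fin d) → ℂ))
    (f : ℕ → Lp ℂ 2 (volume : Measure (EuclideanSpace ℝ (Fin d))))
    (g : Lp ℂ 2 (volume : Measure (EuclideanSpace ℝ (Fin d)))) :
    Tendsto f atTop (𝓝 g) ↔
      ((∀ φ : StrongDual ℂ (Lp ℂ 2 (volume : Measure (EuclideanSpace ℝ (Fin d)))),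
          Tendsto (fun n => φ (f n)) atTop (𝓝 (φ g))) ∧
        Tendsto (fun R : ℝ =>
            Filter.limsup (fun n =>
              ∫ x in {x : EuclideanSpace ℝ (Fin d) | R < ‖x‖}, ‖(f n : EuclideanSpace ℝ (Fin d) → ℂ) x‖ ^ 2)
              atTop)
          atTop (𝓝 0) ∧
        Tendsto (fun L : ℝ =>
            Filter.limsup (fun n =>
              ∫ k in {k : EuclideanSpace ℝ (Fin d) | L < ‖k‖}, ‖(F (f n) : EuclideanSpace ℝ (Fin d) → ℂ) k‖ ^ 2)
              atTop)
          atTop (𝓝 0)) :=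
  L2_strong_convergence_iff_weak_and_tight' d F hF f g
end
end

section
/- For x,y ∈ ℤ, t ∈ ℝ with |t| ≤ τ, the matrix element of the free discrete Schrödinger evolution satisfies |⟨δ_x, e^{itΔ} δ_y⟩| ≤ min(1, e^{4τ} (4τ)^{|x-y|} / |x-y|!). -/
local notation "ℓ²" => lp (fun _ : ℤ => ℂ) 2

open scoped ComplexConjugate ENNReal

set_option maxHeartbeats 1000000

noncomputable section

namespace DSKB

lemma sq_summable (f : ℓ²) : Summable fun z : ℤ => ‖(f : ∀ _ : ℤ, ℂ) z‖ ^ 2 := by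
  have h := (lp.memℓp f).summable (p := 2) (by norm_num)
  have h2 : ((2 : ℝ≥0∞).toReal) = ((2 : ℕ) : ℝ) := by norm_num
  simpa [h2, Real.rpow_natCast] using h

lemma prod_summable (f g : ℓ²) (e e' : ℤ ≃ ℤ) :
    Summable fun z : ℤ => conj ((f : ∀ _ : ℤ, ℂ) (e z)) * (g : ∀ _ : ℤ, ℂ) (e' z) := by
  apply Summable.of_norm
  have hf : Summable fun z : ℤ => ‖(f : ∀ _ : ℤ, ℂ) (e z)‖ ^ 2 :=
    (e.summable_iff (f := fun z => ‖(f : ∀ _ : ℤ, ℂ) z‖ ^ 2)).2 (sq_summable f)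
  have hg : Summable fun z : ℤ => ‖(g : ∀ _ : ℤ, ℂ) (e' z)‖ ^ 2 :=
    (e'.summable_iff (f := fun z => ‖(g : ∀ _ : ℤ, ℂ) z‖ ^ 2)).2 (sq_summable g)
  refine Summable.of_nonneg_of_le (fun z => norm_nonneg _) (fun z => ?_)
    ((hf.add hg).div_const 2)
  rw [norm_mul, RCLike.norm_conj]
  have h1 : (0:ℝ) ≤ ‖(f : ∀ _ : ℤ, ℂ) (e z)‖ := norm_nonneg _
  have h2 : (0:ℝ) ≤ ‖(g : ∀ _ : ℤ, ℂ) (e' z)‖ := norm_nonneg _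
  nlinarith [sq_nonneg (‖(f : ∀ _ : ℤ, ℂ) (e z)‖ - ‖(g : ∀ _ : ℤ, ℂ) (e' z)‖)]

/-- The discrete Laplacian is self-adjoint. -/
lemma selfadj (Δ : ℓ² →L[ℂ] ℓ²)
    (hΔ : ∀ (f : ℓ²) (x : ℤ), (Δ f : ∀ _ : ℤ, ℂ) x
        = (f : ∀ _ : ℤ, ℂ) (x + 1) + (f : ∀ _ : ℤ, ℂ) (x - 1) - 2 * (f : ∀ _ : ℤ, ℂ) x) :
    ContinuousLinearMap.adjoint Δ = Δ := by
  symm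
  rw [ContinuousLinearMap.eq_adjoint_iff]
  intro f g
  have S1 : Summable fun z : ℤ => conj ((f : ∀ _ : ℤ, ℂ) (z + 1)) * (g : ∀ _ : ℤ, ℂ) z := by
    simpa using prod_summable f g (Equiv.addRight 1) (Equiv.refl ℤ)
  have S2 : Summable fun z : ℤ => conj ((f : ∀ _ : ℤ, ℂ) (z - 1)) * (g : ∀ _ : ℤ, ℂ) z := by
    simpa using prod_summable f g (Equiv.subRight 1) (Equiv.refl ℤ)
  have S3 : Summable fun z : ℤ => conj ((f : ∀ _ : ℤ, ℂ) z) * (g : ∀ _ : ℤ, ℂ) z := by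
    simpa using prod_summable f g (Equiv.refl ℤ) (Equiv.refl ℤ)
  have T1 : Summable fun z : ℤ => conj ((f : ∀ _ : ℤ, ℂ) z) * (g : ∀ _ : ℤ, ℂ) (z + 1) := by
    simpa using prod_summable f g (Equiv.refl ℤ) (Equiv.addRight 1)
  have T2 : Summable fun z : ℤ => conj ((f : ∀ _ : ℤ, ℂ) z) * (g : ∀ _ : ℤ, ℂ) (z - 1) := by
    simpa using prod_summable f g (Equiv.refl ℤ) (Equiv.subRight 1)
  have e0 : ∀ z : ℤ, (inner ℂ (((Δ f : ℓ²) : ∀ _ : ℤ, ℂ) z) ((g : ∀ _ : ℤ, ℂ) z) : ℂ)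
      = conj ((f : ∀ _ : ℤ, ℂ) (z + 1)) * (g : ∀ _ : ℤ, ℂ) z
        + conj ((f : ∀ _ : ℤ, ℂ) (z - 1)) * (g : ∀ _ : ℤ, ℂ) z
        - 2 * (conj ((f : ∀ _ : ℤ, ℂ) z) * (g : ∀ _ : ℤ, ℂ) z) := by
    intro z
    rw [RCLike.inner_apply, hΔ f z]
    simp only [map_add, map_sub, map_mul, map_ofNat]
    ring
  have e1 : ∀ z : ℤ, (inner ℂ ((f : ∀ _ : ℤ, ℂ) z) ((((Δ g) : ℓ²) : ∀ _ : ℤ, ℂ) z) : ℂ)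
      = conj ((f : ∀ _ : ℤ, ℂ) z) * (g : ∀ _ : ℤ, ℂ) (z + 1)
        + conj ((f : ∀ _ : ℤ, ℂ) z) * (g : ∀ _ : ℤ, ℂ) (z - 1)
        - 2 * (conj ((f : ∀ _ : ℤ, ℂ) z) * (g : ∀ _ : ℤ, ℂ) z) := by
    intro z
    rw [RCLike.inner_apply, hΔ g z]
    ring
  have r1 : (∑' z : ℤ, conj ((f : ∀ _ : ℤ, ℂ) (z + 1)) * (g : ∀ _ : ℤ, ℂ) z)
      = ∑' z : ℤ, conj ((f : ∀ _ : ℤ, ℂ) z) * (g : ∀ _ : ℤ, ℂ) (z - 1) := by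
    rw [← (Equiv.subRight (1 : ℤ)).tsum_eq
      (fun z => conj ((f : ∀ _ : ℤ, ℂ) (z + 1)) * (g : ∀ _ : ℤ, ℂ) z)]
    exact tsum_congr fun z => by simp
  have r2 : (∑' z : ℤ, conj ((f : ∀ _ : ℤ, ℂ) (z - 1)) * (g : ∀ _ : ℤ, ℂ) z)
      = ∑' z : ℤ, conj ((f : ∀ _ : ℤ, ℂ) z) * (g : ∀ _ : ℤ, ℂ) (z + 1) := by
    rw [← (Equiv.addRight (1 : ℤ)).tsum_eq
      (fun z => conj ((f : ∀ _ : ℤ, ℂ) (z - 1)) * (g : ∀ _ : ℤ, ℂ) z)]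
    exact tsum_congr fun z => by simp
  rw [lp.inner_eq_tsum, lp.inner_eq_tsum, tsum_congr e0, tsum_congr e1,
    Summable.tsum_sub (S1.add S2) (S3.mul_left 2), Summable.tsum_add S1 S2,
    Summable.tsum_sub (T1.add T2) (S3.mul_left 2), Summable.tsum_add T1 T2, r1, r2]
  ring

end DSKB

end

/-- For `x, y ∈ ℤ` and `|t| ≤ τ`, the matrix element of the free discrete Schrödinger
evolution satisfies `|⟨δ_x, e^{itΔ} δ_y⟩| ≤ min(1, e^{4τ} (4τ)^{|x-y|} / |x-y|!)`, where
`Δ` is the discrete Laplacian `(Δf)(x) = f(x+1) + f(x-1) - 2 f(x)` on `ℓ²(ℤ)`. -/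
theorem discrete_schroedinger_kernel_bound
    (Δ : ℓ² →L[ℂ] ℓ²)
    (hΔ : ∀ (f : ℓ²) (x : ℤ), (Δ f : ∀ _ : ℤ, ℂ) x
        = (f : ∀ _ : ℤ, ℂ) (x + 1) + (f : ∀ _ : ℤ, ℂ) (x - 1) - 2 * (f : ∀ _ : ℤ, ℂ) x)
    (x y : ℤ) (t τ : ℝ) (ht : |t| ≤ τ) :
    ‖(inner ℂ (lp.single 2 x (1 : ℂ))
        ((NormedSpace.exp ((Complex.I * (t : ℂ)) • Δ)) (lp.single 2 y (1 : ℂ))) : ℂ)‖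
      ≤ min 1 (Real.exp (4 * τ) * (4 * τ) ^ (x - y).natAbs / ((x - y).natAbs.factorial)) := by
  classical
  let +nondep : NormedAlgebra ℚ (ℓ² →L[ℂ] ℓ²) := .restrictScalars ℚ ℂ _
  have hτ0 : (0:ℝ) ≤ τ := le_trans (abs_nonneg t) ht
  set c : ℂ := Complex.I * (t : ℂ) with hc
  set δx : ℓ² := lp.single 2 x (1 : ℂ) with hδx
  set δy : ℓ² := lp.single 2 y (1 : ℂ) with hδy
  set d : ℕ := (x - y).natAbs with hd
  set U : ℓ² →L[ℂ] ℓ² := NormedSpace.exp (c • Δ) with hU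
  -- Part A: unitarity bound
  have hadj : ContinuousLinearMap.adjoint Δ = Δ := DSKB.selfadj Δ hΔ
  have hskew : c • Δ ∈ skewAdjoint (ℓ² →L[ℂ] ℓ²) := by
    rw [skewAdjoint.mem_iff, star_smul, ContinuousLinearMap.star_eq_adjoint, hadj]
    have hstar : star c = -c := by
      simp [hc, Complex.star_def, Complex.conj_ofReal]
    rw [hstar, neg_smul]
  have hUmem : U ∈ unitary (ℓ² →L[ℂ] ℓ²) :=
    NormedSpace.exp_mem_unitary_of_mem_skewAdjoint hskew
  have hUnorm : ∀ v : ℓ², ‖U v‖ = ‖v‖ := by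
    intro v
    have h1 : (ContinuousLinearMap.adjoint U) (U v) = v := by
      have h := (Unitary.mem_iff.mp hUmem).1
      rw [ContinuousLinearMap.star_eq_adjoint] at h
      calc (ContinuousLinearMap.adjoint U) (U v)
          = ((ContinuousLinearMap.adjoint U) * U) v := rfl
        _ = v := by rw [h]; rfl
    have h2 : (inner ℂ (U v) (U v) : ℂ) = inner ℂ v v := by
      have h := ContinuousLinearMap.adjoint_inner_left U v (U v)
      rw [h1] at h
      exact h.symm
    rw [norm_eq_sqrt_re_inner (𝕜 := ℂ), h2, ← norm_eq_sqrt_re_inner (𝕜 := ℂ)]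
  have hδnorm : ∀ z : ℤ, ‖(lp.single 2 z (1 : ℂ) : ℓ²)‖ = 1 := by
    intro z
    have h := lp.norm_single (p := 2) (E := fun _ : ℤ => ℂ) (by norm_num) z (1 : ℂ)
    simpa using h
  have bound1 : ‖(inner ℂ δx (U δy) : ℂ)‖ ≤ 1 := by
    calc ‖(inner ℂ δx (U δy) : ℂ)‖ ≤ ‖δx‖ * ‖U δy‖ := norm_inner_le_norm _ _
      _ = 1 := by rw [hUnorm, hδx, hδy, hδnorm, hδnorm]; ring
  -- Part B: locality + norm bounds for powers of Δ
  have hkey : ∀ (n : ℕ) (z : ℤ), ‖((Δ ^ n) δy : ∀ _ : ℤ, ℂ) z‖ ≤ 4 ^ n ∧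
      (n < (z - y).natAbs → ((Δ ^ n) δy : ∀ _ : ℤ, ℂ) z = 0) := by
    intro n
    induction n with
    | zero =>
      intro z
      constructor
      · by_cases h : z = y
        · subst h
          simp [hδy, pow_zero, ContinuousLinearMap.one_apply, lp.single_apply_self]
        · simp [hδy, pow_zero, ContinuousLinearMap.one_apply, lp.single_apply_ne _ _ _ h, Pi.single_eq_of_ne h]
      · intro hlt
        have hzy : z ≠ y := by omega
        simp [hδy, pow_zero, ContinuousLinearMap.one_apply, lp.single_apply_ne _ _ _ hzy, Pi.single_eq_of_ne hzy]
    | succ n ih =>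
      intro z
      have hrw : ((Δ ^ (n+1)) δy : ∀ _ : ℤ, ℂ) z
          = ((Δ ^ n) δy : ∀ _ : ℤ, ℂ) (z + 1) + ((Δ ^ n) δy : ∀ _ : ℤ, ℂ) (z - 1)
            - 2 * ((Δ ^ n) δy : ∀ _ : ℤ, ℂ) z := by
        rw [pow_succ', ContinuousLinearMap.mul_apply]
        exact hΔ _ z
      constructor
      · rw [hrw]
        have b1 := (ih (z + 1)).1
        have b2 := (ih (z - 1)).1
        have b3 := (ih z).1
        have htwo : ‖(2 : ℂ) * ((Δ ^ n) δy : ∀ _ : ℤ, ℂ) z‖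
            = 2 * ‖((Δ ^ n) δy : ∀ _ : ℤ, ℂ) z‖ := by
          rw [norm_mul]; norm_num
        calc ‖((Δ ^ n) δy : ∀ _ : ℤ, ℂ) (z + 1) + ((Δ ^ n) δy : ∀ _ : ℤ, ℂ) (z - 1)
              - 2 * ((Δ ^ n) δy : ∀ _ : ℤ, ℂ) z‖
            ≤ ‖((Δ ^ n) δy : ∀ _ : ℤ, ℂ) (z + 1) + ((Δ ^ n) δy : ∀ _ : ℤ, ℂ) (z - 1)‖
              + ‖(2 : ℂ) * ((Δ ^ n) δy : ∀ _ : ℤ, ℂ) z‖ := norm_sub_le _ _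
          _ ≤ ‖((Δ ^ n) δy : ∀ _ : ℤ, ℂ) (z + 1)‖ + ‖((Δ ^ n) δy : ∀ _ : ℤ, ℂ) (z - 1)‖
              + 2 * ‖((Δ ^ n) δy : ∀ _ : ℤ, ℂ) z‖ := by
            rw [htwo]
            have := norm_add_le (((Δ ^ n) δy : ∀ _ : ℤ, ℂ) (z + 1))
              (((Δ ^ n) δy : ∀ _ : ℤ, ℂ) (z - 1))
            linarith
          _ ≤ 4 ^ n + 4 ^ n + 2 * 4 ^ n := by linarith
          _ = 4 ^ (n + 1) := by ring
      · intro hlt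
        rw [hrw, (ih (z + 1)).2 (by omega), (ih (z - 1)).2 (by omega), (ih z).2 (by omega)]
        ring
  -- Part C: the series representation
  have hterm : ∀ n : ℕ, (inner ℂ δx (((c • Δ) ^ n) δy) : ℂ)
      = c ^ n * (((Δ ^ n) δy : ∀ _ : ℤ, ℂ) x) := by
    intro n
    rw [smul_pow, ContinuousLinearMap.smul_apply, inner_smul_right, hδx, lp.inner_single_left]
    rw [RCLike.inner_apply]
    simp
  have hsumop : Summable fun n : ℕ => ((n.factorial : ℂ))⁻¹ • ((c • Δ) ^ n) :=
    NormedSpace.expSeries_summable' (𝕂 := ℂ) (c • Δ)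
  set Φ : (ℓ² →L[ℂ] ℓ²) →L[ℂ] ℂ :=
    (innerSL ℂ δx).comp ((ContinuousLinearMap.apply ℂ ℓ²) δy) with hΦ
  have hrepr : (inner ℂ δx (U δy) : ℂ)
      = ∑' n : ℕ, ((n.factorial : ℂ))⁻¹ • (inner ℂ δx (((c • Δ) ^ n) δy) : ℂ) := by
    have h0 : (inner ℂ δx (U δy) : ℂ) = Φ U := rfl
    rw [h0, hU, NormedSpace.exp_eq_tsum ℂ, Φ.map_tsum hsumop]
    exact tsum_congr fun n => by
      simp [hΦ, ContinuousLinearMap.comp_apply, ContinuousLinearMap.apply_apply, map_smul]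
  have hct : ‖c‖ = |t| := by simp [hc]
  have hbound : ∀ n : ℕ, ‖((n.factorial : ℂ))⁻¹ • (inner ℂ δx (((c • Δ) ^ n) δy) : ℂ)‖
      ≤ (4 * τ) ^ n / n.factorial := by
    intro n
    rw [hterm n, norm_smul, norm_mul, norm_pow, hct, norm_inv]
    have h1 : ‖((n.factorial : ℂ))‖ = (n.factorial : ℝ) := by
      simp
    rw [h1]
    have hfac : (0:ℝ) < (n.factorial : ℝ) := by exact_mod_cast n.factorial_pos
    have h2 : |t| ^ n * ‖((Δ ^ n) δy : ∀ _ : ℤ, ℂ) x‖ ≤ τ ^ n * 4 ^ n := by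
      have := (hkey n x).1
      have h3 : |t| ^ n ≤ τ ^ n := pow_le_pow_left₀ (abs_nonneg t) ht n
      have h4 : (0:ℝ) ≤ |t| ^ n := pow_nonneg (abs_nonneg t) n
      nlinarith [norm_nonneg (((Δ ^ n) δy : ∀ _ : ℤ, ℂ) x), pow_nonneg hτ0 n]
    rw [div_eq_inv_mul]
    have h5 : (0:ℝ) ≤ ((n.factorial : ℝ))⁻¹ := by positivity
    calc (n.factorial : ℝ)⁻¹ * (|t| ^ n * ‖((Δ ^ n) δy : ∀ _ : ℤ, ℂ) x‖)
        ≤ (n.factorial : ℝ)⁻¹ * (τ ^ n * 4 ^ n) := by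
          exact mul_le_mul_of_nonneg_left h2 h5
      _ = (n.factorial : ℝ)⁻¹ * (4 * τ) ^ n := by ring
  have hvanish : ∀ n : ℕ, n < d →
      ((n.factorial : ℂ))⁻¹ • (inner ℂ δx (((c • Δ) ^ n) δy) : ℂ) = 0 := by
    intro n hn
    rw [hterm n, (hkey n x).2 (by omega)]
    simp
  set a : ℕ → ℂ := fun n => ((n.factorial : ℂ))⁻¹ • (inner ℂ δx (((c • Δ) ^ n) δy) : ℂ) with ha
  have hsnorm : Summable fun n : ℕ => ‖a n‖ :=
    Summable.of_nonneg_of_le (fun n => norm_nonneg _) hbound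
      (Real.summable_pow_div_factorial (4 * τ))
  have hinj : Function.Injective fun k : ℕ => d + k := fun i j h => by
    have h' : d + i = d + j := h
    omega
  have bound2 : ‖(inner ℂ δx (U δy) : ℂ)‖
      ≤ Real.exp (4 * τ) * (4 * τ) ^ d / d.factorial := by
    calc ‖(inner ℂ δx (U δy) : ℂ)‖ = ‖∑' n : ℕ, a n‖ := by rw [hrepr]
      _ ≤ ∑' n : ℕ, ‖a n‖ := norm_tsum_le_tsum_norm hsnorm
      _ = ∑' k : ℕ, ‖a (d + k)‖ := by
          refine (Function.Injective.tsum_eq hinj ?_).symm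
          intro n hn
          simp only [Function.mem_support] at hn
          have hnd : ¬ n < d := fun h => hn (by simp only [ha]; rw [hvanish n h, norm_zero])
          exact ⟨n - d, show d + (n - d) = n by omega⟩
      _ ≤ ∑' k : ℕ, ((4 * τ) ^ d / d.factorial) * ((4 * τ) ^ k / k.factorial) := by
          refine Summable.tsum_le_tsum (fun k => ?_)
            (hsnorm.comp_injective hinj)
            ((Real.summable_pow_div_factorial (4 * τ)).mul_left _)
          have hfac : ((d.factorial : ℝ)) * (k.factorial : ℝ) ≤ ((d + k).factorial : ℝ) := by
            exact_mod_cast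
              Nat.le_of_dvd (d + k).factorial_pos (Nat.factorial_mul_factorial_dvd_factorial_add d k)
          have h0 : (0:ℝ) ≤ (4 * τ) ^ (d + k) := by positivity
          calc ‖a (d + k)‖ ≤ (4 * τ) ^ (d + k) / ((d + k).factorial : ℝ) := hbound (d + k)
            _ ≤ (4 * τ) ^ (d + k) / ((d.factorial : ℝ) * (k.factorial : ℝ)) := by
                gcongr
            _ = ((4 * τ) ^ d / d.factorial) * ((4 * τ) ^ k / k.factorial) := by
                rw [pow_add, div_mul_div_comm]
      _ = ((4 * τ) ^ d / d.factorial) * Real.exp (4 * τ) := by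
          rw [tsum_mul_left]
          congr 1
          rw [Real.exp_eq_exp_ℝ, NormedSpace.exp_eq_tsum_div]
      _ = Real.exp (4 * τ) * (4 * τ) ^ d / d.factorial := by ring
  exact le_min bound1 bound2
end
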